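/- arXiv:0805.2843 — 2 statements merged into one kernel-verified Lean document; each statement's English description precedes it below -/
import Mathlib

section
/- Semi-discrete one-soliton verification of the first bilinear equation: let a, c, p ∈ ℝ with 1 ± ap ≠ 0, p ≠ ±c, a ≠ 0, and define f_k(t) = ψ⁽⁰⁾(k,t), g_k(t) = ψ⁽¹⁾(k,t), h_k(t) = ψ⁽⁻¹⁾(k,t) where ψ⁽ⁿ⁾(k,t) = (p−c)ⁿ(1−ap)^{−k} e^{t/(p−c)} + ε(−p−c)ⁿ(1+ap)^{−k} e^{−t/(p+c)}, ε = ±1. Then ((1−ac)/a)·(f_{k+1}' f_k − f_{k+1} f_k') − f_{k+1} f_k = −g_{k+1} h_k for all k ∈ ℤ and t ∈ ℝ, where ' denotes d/dt. -/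
set_option maxHeartbeats 1000000


/-- Semi-discrete one-soliton verification of the first bilinear equation
`((1−ac)/a)D_t f_{k+1}·f_k − f_{k+1}f_k = −g_{k+1}h_k`. -/
theorem stmt14
    (a c p ε : ℝ) (ha : a ≠ 0) (h1 : 1 - a * p ≠ 0) (h2 : 1 + a * p ≠ 0)
    (hpc : p ≠ c) (hpc2 : p ≠ -c) (hε : ε = 1 ∨ ε = -1)
    (ψ : ℤ → ℤ → ℝ → ℝ)
    (hψ : ∀ n k t, ψ n k t =
      (p - c) ^ n * (1 - a * p) ^ (-k) * Real.exp (t / (p - c)) +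
      ε * (-p - c) ^ n * (1 + a * p) ^ (-k) * Real.exp (-t / (p + c)))
    (f g h : ℤ → ℝ → ℝ)
    (hf : ∀ k t, f k t = ψ 0 k t) (hg : ∀ k t, g k t = ψ 1 k t)
    (hh : ∀ k t, h k t = ψ (-1) k t) :
    ∀ (k : ℤ) (t : ℝ),
      ((1 - a * c) / a) *
        (deriv (fun t' => f (k + 1) t') t * f k t
          - f (k + 1) t * deriv (fun t' => f k t') t)
        - f (k + 1) t * f k t = -(g (k + 1) t * h k t) := by
  intro k t
  have hpc' : p - c ≠ 0 := sub_ne_zero.mpr hpc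
  have hpc2' : p + c ≠ 0 := by
    intro hc; apply hpc2; linarith
  have hε2 : ε * ε = 1 := by rcases hε with h | h <;> simp [h]
  -- derivative of a generic combination
  have key : ∀ (A B : ℝ),
      HasDerivAt (fun t' : ℝ => A * Real.exp (t' / (p - c)) + B * Real.exp (-t' / (p + c)))
        (A * (Real.exp (t / (p - c)) * (1 / (p - c))) +
         B * (Real.exp (-t / (p + c)) * (-1 / (p + c)))) t := by
    intro A B
    have h1' : HasDerivAt (fun t' : ℝ => Real.exp (t' / (p - c)))
        (Real.exp (t / (p - c)) * (1 / (p - c))) t := by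
      have := ((hasDerivAt_id t).div_const (p - c)).exp
      simpa using this
    have h2' : HasDerivAt (fun t' : ℝ => Real.exp (-t' / (p + c)))
        (Real.exp (-t / (p + c)) * (-1 / (p + c))) t := by
      have := (((hasDerivAt_id t).neg).div_const (p + c)).exp
      simpa [neg_div] using this
    exact (h1'.const_mul A).add (h2'.const_mul B)
  -- rewrite f as such a combination
  have hfe : ∀ m : ℤ, (fun t' => f m t') =
      fun t' : ℝ => ((1 - a * p) ^ (-m) : ℝ) * Real.exp (t' / (p - c)) +
        (ε * (1 + a * p) ^ (-m)) * Real.exp (-t' / (p + c)) := by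
    intro m; funext t'; rw [hf, hψ]; simp
  have hderiv : ∀ m : ℤ, deriv (fun t' => f m t') t =
      ((1 - a * p) ^ (-m) : ℝ) * (Real.exp (t / (p - c)) * (1 / (p - c))) +
        (ε * (1 + a * p) ^ (-m)) * (Real.exp (-t / (p + c)) * (-1 / (p + c))) := by
    intro m; rw [hfe m]; exact (key _ _).deriv
  -- zpow relations
  have hz1 : ((1 - a * p) : ℝ) ^ (-(k + 1)) = (1 - a * p) ^ (-k) * (1 - a * p)⁻¹ := by
    have : (-(k + 1) : ℤ) = -k + -1 := by ring
    rw [this, zpow_add₀ h1, zpow_neg_one]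
  have hz2 : ((1 + a * p) : ℝ) ^ (-(k + 1)) = (1 + a * p) ^ (-k) * (1 + a * p)⁻¹ := by
    have : (-(k + 1) : ℤ) = -k + -1 := by ring
    rw [this, zpow_add₀ h2, zpow_neg_one]
  rw [hderiv, hderiv]
  have hmpc : (-p - c : ℝ)⁻¹ = -(p + c)⁻¹ := by
    rw [show (-p - c : ℝ) = -(p + c) by ring, inv_neg]
  simp only [hf, hg, hh, hψ, zpow_zero, zpow_one, zpow_neg_one, hz1, hz2, hmpc, one_mul]
  set X := ((1 - a * p) : ℝ) ^ (-k) with hX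
  set Y := ((1 + a * p) : ℝ) ^ (-k) with hY
  set E1 := Real.exp (t / (p - c)) with hE1
  set E2 := Real.exp (-t / (p + c)) with hE2
  rcases hε with rfl | rfl <;> field_simp <;> ring
end

section
/- Semi-discrete one-soliton verification of the second bilinear equation: with the same f_k, g_k, h_k as above, ((1+ac)/a)·(f_{k+1}' f_k − f_{k+1} f_k') − f_{k+1} f_k = −g_k h_{k+1} for all k ∈ ℤ and t ∈ ℝ. -/
set_option maxHeartbeats 2000000 in
/-- Semi-discrete one-soliton verification of the second bilinear equation
`((1+ac)/a)D_t f_{k+1}·f_k − f_{k+1}f_k = −g_k h_{k+1}`. -/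
theorem stmt15
    (a c p ε : ℝ) (ha : a ≠ 0) (h1 : 1 - a * p ≠ 0) (h2 : 1 + a * p ≠ 0)
    (hpc : p ≠ c) (hpc2 : p ≠ -c) (hε : ε = 1 ∨ ε = -1)
    (ψ : ℤ → ℤ → ℝ → ℝ)
    (hψ : ∀ n k t, ψ n k t =
      (p - c) ^ n * (1 - a * p) ^ (-k) * Real.exp (t / (p - c)) +
      ε * (-p - c) ^ n * (1 + a * p) ^ (-k) * Real.exp (-t / (p + c)))
    (f g h : ℤ → ℝ → ℝ)
    (hf : ∀ k t, f k t = ψ 0 k t) (hg : ∀ k t, g k t = ψ 1 k t)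
    (hh : ∀ k t, h k t = ψ (-1) k t) :
    ∀ (k : ℤ) (t : ℝ),
      ((1 + a * c) / a) *
        (deriv (fun t' => f (k + 1) t') t * f k t
          - f (k + 1) t * deriv (fun t' => f k t') t)
        - f (k + 1) t * f k t = -(g k t * h (k + 1) t) := by
  have hmc : p - c ≠ 0 := sub_ne_zero.mpr hpc
  have hpc' : p + c ≠ 0 := fun hz => hpc2 (by linarith [hz])
  have hmpc : -p - c ≠ 0 := by intro hz; apply hpc'; linarith
  intro k t
  -- derivative lemma
  have hd : ∀ (B C : ℝ), deriv
      (fun t' => B * Real.exp (t' / (p - c)) + C * Real.exp (-t' / (p + c))) t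
      = B * (Real.exp (t / (p - c)) * (1 / (p - c)))
        + C * (Real.exp (-t / (p + c)) * (-1 / (p + c))) := by
    intro B C
    have H1 : HasDerivAt (fun t' : ℝ => t' / (p - c)) (1 / (p - c)) t :=
      (hasDerivAt_id t).div_const (p - c)
    have H2 : HasDerivAt (fun t' : ℝ => -t' / (p + c)) (-1 / (p + c)) t := by
      simpa using ((hasDerivAt_id t).neg.div_const (p + c))
    exact (((H1.exp.const_mul B).add (H2.exp.const_mul C))).deriv
  have key : ∀ m : ℤ, (fun t' => f m t') = fun t' =>
      ((1 - a * p) ^ (-m)) * Real.exp (t' / (p - c))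
      + (ε * (1 + a * p) ^ (-m)) * Real.exp (-t' / (p + c)) := by
    intro m; funext t'; rw [hf, hψ, zpow_zero, zpow_zero]; ring
  have hfk : ∀ (m : ℤ) (s : ℝ), f m s =
      ((1 - a * p) ^ (-m)) * Real.exp (s / (p - c))
      + (ε * (1 + a * p) ^ (-m)) * Real.exp (-s / (p + c)) := by
    intro m s; rw [hf, hψ, zpow_zero, zpow_zero]; ring
  rw [key (k+1), key k, hd, hd, hfk (k+1), hfk k, hg, hh, hψ, hψ]
  have e1 : (1 - a * p) ^ (-(k+1)) = (1 - a * p) ^ (-k) * (1 - a * p)⁻¹ := by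
    rw [neg_add, zpow_add₀ h1]; norm_num
  have e2 : (1 + a * p) ^ (-(k+1)) = (1 + a * p) ^ (-k) * (1 + a * p)⁻¹ := by
    rw [neg_add, zpow_add₀ h2]; norm_num
  rw [e1, e2]
  have hx : (1 - a * p) ^ (-k) ≠ 0 := zpow_ne_zero _ h1
  have hy : (1 + a * p) ^ (-k) ≠ 0 := zpow_ne_zero _ h2
  have hE1 : Real.exp (t / (p - c)) ≠ 0 := Real.exp_ne_zero _
  have hE2 : Real.exp (-t / (p + c)) ≠ 0 := Real.exp_ne_zero _
  simp only [zpow_one, zpow_neg_one]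
  set u := (1 - a * p) ^ (-k) with hu
  set v := (1 + a * p) ^ (-k) with hv
  set E1 := Real.exp (t / (p - c)) with hE1'
  set E2 := Real.exp (-t / (p + c)) with hE2'
  clear_value u v E1 E2
  clear hψ hf hg hh hd key hfk hu hv hE1' hE2'
  rcases hε with rfl | rfl <;>
  · field_simp
    ring
end
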